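/- Let μ, μ̂ ∈ ℝ and let r, r̂, r̄ > 0 satisfy |μ̂ - μ| ≤ r, r ≤ r̂, and r̂ ≤ r̄. Then |μ̂·𝟙{|μ̂| > 2r̂} - μ·𝟙{|μ| > r}| ≤ 3 r̄ · 𝟙{|μ| ≥ r}. -/

import Mathlib

theorem stmt_0 (μ μhat r rhat rbar : ℝ)
    (hr : 0 < r) (hrhat : 0 < rhat) (hrbar : 0 < rbar)
    (h1 : |μhat - μ| ≤ r) (h2 : r ≤ rhat) (h3 : rhat ≤ rbar) :
    |(if 2 * rhat < |μhat| then μhat else 0) - (if r < |μ| then μ else 0)| ≤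
      3 * rbar * (if r ≤ |μ| then 1 else 0) := by
  have hs1 : |μhat| - |μ| ≤ r := le_trans (abs_sub_abs_le_abs_sub _ _) h1
  have hs2 : |μ| - |μhat| ≤ r := le_trans (abs_sub_abs_le_abs_sub _ _)
    (by rwa [abs_sub_comm])
  split_ifs with hA hB hC hB hC hC
  all_goals simp only [sub_zero, zero_sub, abs_neg, abs_zero, mul_one, mul_zero]
  all_goals try push_neg at *
  · linarith
  · linarith
  · linarith
  · linarith
  · linarith
  · linarith
  · linarith
  · linarith
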